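/- Let 0 < p_1 ≤ p_0 < ∞, 0 < q_0 < q_1 ≤ ∞, and A ≥ 0. Then the inclusion ℓ^{q_0}(2^{-j/p_0}·ℓ^{p_0}{1,...,2^j})_{j≥A} ↪ ℓ^{q_1}(2^{-j/p_1}·ℓ^{p_1}{1,...,2^j})_{j≥A} is not finitely strictly singular: there is a constant c > 0 such that b_n of this inclusion is ≥ c for all n. -/

import Mathlib

open MeasureTheory Set ENNReal Filter

/-- The `ℓ^p` norm of a family of extended nonnegative reals (with `p = ∞` giving the sup). -/
noncomputable def elpE {ι : Type*} (p : ℝ≥0∞) (x : ι → ℝ≥0∞) : ℝ≥0∞ :=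
  if p = ∞ then ⨆ k, x k else (∑' k, x k ^ p.toReal) ^ (1 / p.toReal)

/-- The `ℓ^p` (quasi-)norm of a real-valued family. -/
noncomputable def elp {ι : Type*} (p : ℝ≥0∞) (x : ι → ℝ) : ℝ≥0∞ :=
  elpE p fun k => (‖x k‖₊ : ℝ≥0∞)

/-- The norm of `ℓ^q(2^{-j/p}·ℓ^p{1,…,2^j})_{j ≥ A}` on block sequences
(the `j`-th block, `j ≥ A`, indexed here by `j = A + i`, has length `2^{A+i}`). -/
noncomputable def blockNorm (p q : ℝ≥0∞) (A : ℕ)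
    (x : (i : ℕ) → Fin (2 ^ (A + i)) → ℝ) : ℝ≥0∞ :=
  elpE q fun i : ℕ => (2 : ℝ≥0∞) ^ (-(((A + i : ℕ) : ℝ) / p.toReal)) * elp p (x i)

/-- The `n`-th Bernstein number of the identity viewed as a map from the space with
(quasi-)norm `N` to the space with (quasi-)norm `M`. -/
noncomputable def bern {E : Type*} [AddCommGroup E] [Module ℝ E]
    (N M : E → ℝ≥0∞) (n : ℕ) : ℝ≥0∞ :=
  ⨆ V : {V : Submodule ℝ E // Module.finrank ℝ V = n ∧ ∀ x ∈ V, N x ≠ ∞},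
    ⨅ x : {x : E // x ∈ V.1 ∧ N x = 1}, M x.1

namespace FSSAux
open Finset Real

/-! ### Rademacher functions on the discrete cube -/

def sg (b : Bool) : ℝ := if b then 1 else -1

lemma sg_mul_self (b : Bool) : sg b * sg b = 1 := by cases b <;> simp [sg]

variable {M : ℕ}

lemma sum_prod_bool (g : Fin M → Bool → ℝ) :
    ∑ b : Fin M → Bool, ∏ j, g j (b j) = ∏ j, (g j true + g j false) := by
  rw [← Fintype.piFinset_univ, ← Finset.prod_univ_sum]
  simp

def rad (j : Fin M) (b : Fin M → Bool) : ℝ := sg (b j)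

lemma sum_rad_mul_rad (j j' : Fin M) :
    ∑ b : Fin M → Bool, rad j b * rad j' b = if j = j' then (2:ℝ)^M else 0 := by
  rcases eq_or_ne j j' with rfl | hne
  · simp only [if_pos rfl]
    have : ∀ b : Fin M → Bool, rad j b * rad j b = 1 := fun b => sg_mul_self _
    rw [Finset.sum_congr rfl fun b _ => this b]
    simp [Fintype.card_fun]
  · simp only [if_neg hne]
    have key : ∀ b : Fin M → Bool, rad j b * rad j' b
        = ∏ i, ((if i = j then sg (b i) else 1) * (if i = j' then sg (b i) else 1)) := by
      intro b
      rw [Finset.prod_mul_distrib]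
      simp [rad, Finset.prod_ite_eq']
    rw [Finset.sum_congr rfl fun b _ => key b]
    have := sum_prod_bool (M := M)
      (fun i x => (if i = j then sg x else 1) * (if i = j' then sg x else 1))
    rw [this]
    apply Finset.prod_eq_zero (Finset.mem_univ j)
    simp [if_neg hne, sg]

def rsum (a : Fin M → ℝ) (b : Fin M → Bool) : ℝ := ∑ j, a j * rad j b

lemma sum_rsum_sq (a : Fin M → ℝ) :
    ∑ b : Fin M → Bool, (rsum a b)^2 = (2:ℝ)^M * ∑ j, (a j)^2 := by
  have h1 : ∀ b : Fin M → Bool, (rsum a b)^2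
      = ∑ j, ∑ j', (a j * a j') * (rad j b * rad j' b) := by
    intro b
    rw [sq, rsum, Finset.sum_mul_sum]
    exact Finset.sum_congr rfl fun j _ => Finset.sum_congr rfl fun j' _ => by ring
  calc ∑ b : Fin M → Bool, (rsum a b)^2
      = ∑ j : Fin M, ∑ j' : Fin M, (a j * a j') * ∑ b : Fin M → Bool, rad j b * rad j' b := by
        rw [Finset.sum_congr rfl fun b _ => h1 b, Finset.sum_comm]
        refine Finset.sum_congr rfl fun j _ => ?_
        rw [Finset.sum_comm]
        exact Finset.sum_congr rfl fun j' _ => (Finset.mul_sum _ _ _).symm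
    _ = ∑ j : Fin M, (a j * a j) * (2:ℝ)^M := by
        refine Finset.sum_congr rfl fun j _ => ?_
        rw [Finset.sum_eq_single j (fun j' _ h => by rw [sum_rad_mul_rad, if_neg (Ne.symm h), mul_zero]) (by simp)]
        rw [sum_rad_mul_rad, if_pos rfl]
    _ = (2:ℝ)^M * ∑ j, (a j)^2 := by
        rw [← Finset.sum_mul, mul_comm]
        exact congrArg _ (Finset.sum_congr rfl fun j _ => by ring)

lemma sum_exp_rsum (a : Fin M → ℝ) :
    ∑ b : Fin M → Bool, Real.exp (rsum a b) = (2:ℝ)^M * ∏ j, Real.cosh (a j) := by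
  have h1 : ∀ b : Fin M → Bool, Real.exp (rsum a b) = ∏ j, Real.exp (a j * sg (b j)) := by
    intro b; rw [rsum, Real.exp_sum]; rfl
  rw [Finset.sum_congr rfl fun b _ => h1 b,
    sum_prod_bool (fun j x => Real.exp (a j * sg x))]
  have h2 : ∀ j : Fin M, Real.exp (a j * sg true) + Real.exp (a j * sg false)
      = 2 * Real.cosh (a j) := by
    intro j; simp only [sg, Real.cosh_eq]
    norm_num; ring
  rw [Finset.prod_congr rfl fun j _ => h2 j, Finset.prod_mul_distrib]
  simp [mul_comm]

lemma rsum_neg (a : Fin M → ℝ) (b : Fin M → Bool) : rsum (fun j => -(a j)) b = -(rsum a b) := by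
  rw [rsum, rsum, ← Finset.sum_neg_distrib]
  exact Finset.sum_congr rfl fun j _ => by ring

lemma sum_cosh_rsum (a : Fin M → ℝ) :
    ∑ b : Fin M → Bool, Real.cosh (rsum a b) = (2:ℝ)^M * ∏ j, Real.cosh (a j) := by
  have h3 := sum_exp_rsum (fun j => -(a j))
  simp only [rsum_neg, Real.cosh_neg] at h3
  have h2 := sum_exp_rsum a
  have h4 : ∀ b : Fin M → Bool, Real.cosh (rsum a b)
      = (Real.exp (rsum a b) + Real.exp (-(rsum a b))) / 2 := fun b => Real.cosh_eq _
  rw [Finset.sum_congr rfl fun b _ => h4 b, ← Finset.sum_div, Finset.sum_add_distrib, h2, h3]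
  ring

lemma rsum_smul (c : ℝ) (a : Fin M → ℝ) (b : Fin M → Bool) :
    rsum (fun j => c * a j) b = c * rsum a b := by
  rw [rsum, rsum, Finset.mul_sum]
  exact Finset.sum_congr rfl fun j _ => by ring

lemma rsum_zero (b : Fin M → Bool) : rsum (fun _ : Fin M => (0:ℝ)) b = 0 := by
  rw [rsum]
  exact Finset.sum_eq_zero fun j _ => by ring

/-! ### Pointwise inequalities -/

lemma pow_le_cosh {m : ℕ} (hm1 : 1 ≤ m) (hm : Even m) (x : ℝ) :
    x ^ m ≤ 2 * (m:ℝ)^m * Real.cosh x := by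
  have h0 : (0:ℝ) < m := by exact_mod_cast hm1
  have h1 : |x| ^ m ≤ (m:ℝ)^m * Real.exp |x| := by
    have h2 : |x| / m ≤ Real.exp (|x| / m) :=
      le_trans (by linarith) (Real.add_one_le_exp _)
    have h3 : (|x| / m) ^ m ≤ (Real.exp (|x| / m)) ^ m :=
      pow_le_pow_left₀ (by positivity) h2 m
    rw [← Real.exp_nat_mul] at h3
    have h4 : (m:ℝ) * (|x| / m) = |x| := by field_simp
    rw [h4] at h3
    have h5 : (|x| / m) ^ m = |x|^m / (m:ℝ)^m := div_pow _ _ _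
    rw [h5, div_le_iff₀ (by positivity)] at h3
    linarith [h3]
  have h6 : Real.exp |x| ≤ 2 * Real.cosh x := by
    rw [Real.cosh_eq]
    rcases abs_cases x with ⟨h, _⟩ | ⟨h, _⟩ <;> rw [h] <;>
      [linarith [Real.exp_pos (-x)]; linarith [Real.exp_pos x]]
  calc x ^ m = |x| ^ m := (hm.pow_abs x).symm
    _ ≤ (m:ℝ)^m * Real.exp |x| := h1
    _ ≤ (m:ℝ)^m * (2 * Real.cosh x) := by
        have := Real.cosh_pos x
        nlinarith [Real.exp_pos |x|, pow_pos h0 m]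
    _ = 2 * (m:ℝ)^m * Real.cosh x := by ring

lemma rpow_abs_le {m : ℕ} (hm : Even m) {r : ℝ} (hr : 0 ≤ r) (hrm : r ≤ m) (x : ℝ) :
    |x| ^ r ≤ 1 + x ^ m := by
  rcases le_or_gt |x| 1 with h | h
  · have := Real.rpow_le_one (abs_nonneg x) h hr
    have := hm.pow_nonneg x
    linarith
  · have h1 : |x| ^ r ≤ |x| ^ (m:ℝ) :=
      Real.rpow_le_rpow_of_exponent_le (le_of_lt h) hrm
    rw [Real.rpow_natCast, hm.pow_abs] at h1
    nlinarith [h1]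

lemma prod_cosh_le (a : Fin M → ℝ) (h1 : ∑ j, (a j)^2 = 1) :
    ∏ j, Real.cosh (a j) ≤ Real.exp 1 := by
  calc ∏ j, Real.cosh (a j) ≤ ∏ j, Real.exp ((a j)^2 / 2) :=
        Finset.prod_le_prod (fun j _ => (Real.cosh_pos _).le) (fun j _ => Real.cosh_le_exp_half_sq _)
    _ = Real.exp (∑ j, (a j)^2 / 2) := (Real.exp_sum _ _).symm
    _ ≤ Real.exp 1 := by
        apply Real.exp_le_exp.2
        rw [← Finset.sum_div, h1]; norm_num

/-! ### Moment bounds (Khintchine-type inequalities) -/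

noncomputable def Cst (m : ℕ) : ℝ := 1 + 2 * (m:ℝ)^m * Real.exp 1

lemma Cst_pos (m : ℕ) : 0 < Cst m := by
  have : (0:ℝ) ≤ 2 * (m:ℝ)^m * Real.exp 1 := by positivity
  unfold Cst; linarith

lemma Cst_one_le (m : ℕ) : 1 ≤ Cst m := by
  have : (0:ℝ) ≤ 2 * (m:ℝ)^m * Real.exp 1 := by positivity
  unfold Cst; linarith

lemma card_bool_fun : (Fintype.card (Fin M → Bool) : ℝ) = (2:ℝ)^M := by
  simp [Fintype.card_fun]

lemma sum_one_bool : ∑ _b : Fin M → Bool, (1:ℝ) = (2:ℝ)^M := by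
  rw [Finset.sum_const, nsmul_eq_mul, mul_one, ← card_bool_fun]
  simp [Finset.card_univ]

lemma moment_upper (a : Fin M → ℝ) (h1 : ∑ j, (a j)^2 = 1)
    {r : ℝ} (hr : 0 ≤ r) {m : ℕ} (hm : Even m) (hm1 : 1 ≤ m) (hrm : r ≤ m) :
    ∑ b : Fin M → Bool, |rsum a b| ^ r ≤ (2:ℝ)^M * Cst m := by
  have step : ∀ b : Fin M → Bool, |rsum a b| ^ r
      ≤ 1 + 2 * (m:ℝ)^m * Real.cosh (rsum a b) := by
    intro b
    calc |rsum a b| ^ r ≤ 1 + (rsum a b) ^ m := rpow_abs_le hm hr hrm _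
      _ ≤ 1 + 2 * (m:ℝ)^m * Real.cosh (rsum a b) := by
          linarith [pow_le_cosh hm1 hm (rsum a b)]
  calc ∑ b : Fin M → Bool, |rsum a b| ^ r
      ≤ ∑ b : Fin M → Bool, (1 + 2 * (m:ℝ)^m * Real.cosh (rsum a b)) :=
        Finset.sum_le_sum fun b _ => step b
    _ = (2:ℝ)^M + 2 * (m:ℝ)^m * ((2:ℝ)^M * ∏ j, Real.cosh (a j)) := by
        rw [Finset.sum_add_distrib, sum_one_bool, ← Finset.mul_sum, sum_cosh_rsum]
    _ ≤ (2:ℝ)^M + 2 * (m:ℝ)^m * ((2:ℝ)^M * Real.exp 1) := by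
        have h2 := prod_cosh_le a h1
        have h3 : (0:ℝ) ≤ 2 * (m:ℝ)^m := by positivity
        have h4 : (0:ℝ) ≤ (2:ℝ)^M := by positivity
        have := mul_le_mul_of_nonneg_left (mul_le_mul_of_nonneg_left h2 h4) h3
        linarith
    _ = (2:ℝ)^M * Cst m := by unfold Cst; ring

lemma moment_lower_pow2 (a : Fin M → ℝ) (h1 : ∑ j, (a j)^2 = 1) :
    ∀ k : ℕ, (2:ℝ)^M ≤ ∑ b : Fin M → Bool, (rsum a b) ^ (2^(k+1)) := by
  intro k
  induction k with
  | zero =>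
      simp only [zero_add, pow_one]
      rw [sum_rsum_sq a, h1, mul_one]
  | succ k ih =>
      have e : ∀ b : Fin M → Bool, ((rsum a b)^(2^(k+1)))^2 = (rsum a b)^(2^(k+2)) := by
        intro b; rw [← pow_mul]; congr 1
      have key : (∑ b : Fin M → Bool, (rsum a b)^(2^(k+1)))^2
          ≤ (2:ℝ)^M * ∑ b : Fin M → Bool, (rsum a b)^(2^(k+2)) := by
        have h5 := sq_sum_le_card_mul_sum_sq (s := (univ : Finset (Fin M → Bool)))
          (f := fun b => (rsum a b)^(2^(k+1)))
        have hc : (((univ : Finset (Fin M → Bool)).card) : ℝ) = (2:ℝ)^M := by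
          rw [Finset.card_univ]; exact card_bool_fun
        rw [hc, Finset.sum_congr rfl fun b _ => e b] at h5
        exact h5
      have h2 : (0:ℝ) < (2:ℝ)^M := by positivity
      nlinarith [ih]

lemma moment_lower (a : Fin M → ℝ) (h1 : ∑ j, (a j)^2 = 1)
    {r : ℝ} (hr : 0 < r) (k : ℕ) (hrk : r ≤ 2^(k+1)) :
    (2:ℝ)^M / Cst (2^(k+2)) ≤ ∑ b : Fin M → Bool, |rsum a b| ^ r := by
  set m : ℕ := 2^(k+1) with hm
  have hmr : (m:ℝ) = 2^(k+1) := by rw [hm]; push_cast; norm_num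
  have pointwise : ∀ b : Fin M → Bool,
      (rsum a b) ^ m = |rsum a b| ^ (r/2) * |rsum a b| ^ ((m:ℝ) - r/2) := by
    intro b
    have hmeven : Even m := ⟨2^k, by rw [hm]; ring⟩
    have e1 : (rsum a b) ^ m = |rsum a b| ^ (m:ℝ) := by
      rw [Real.rpow_natCast, hmeven.pow_abs]
    have e2 : |rsum a b| ^ ((r/2) + ((m:ℝ) - r/2)) =
        |rsum a b| ^ (r/2) * |rsum a b| ^ ((m:ℝ) - r/2) := by
      apply Real.rpow_add' (abs_nonneg _)
      have : (0:ℝ) < m := by rw [hmr]; positivity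
      intro h; linarith [h]
    rw [e1, ← e2]; congr 1; ring
  have cs := Finset.sum_mul_sq_le_sq_mul_sq (univ : Finset (Fin M → Bool))
    (fun b => |rsum a b| ^ (r/2)) (fun b => |rsum a b| ^ ((m:ℝ) - r/2))
  have e3 : ∀ b : Fin M → Bool, (|rsum a b| ^ (r/2))^2 = |rsum a b| ^ r := by
    intro b
    rw [← Real.rpow_natCast (|rsum a b| ^ (r/2)) 2, ← Real.rpow_mul (abs_nonneg _)]
    norm_num
  have e4 : ∀ b : Fin M → Bool, (|rsum a b| ^ ((m:ℝ) - r/2))^2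
      = |rsum a b| ^ (2*(m:ℝ) - r) := by
    intro b
    rw [← Real.rpow_natCast (|rsum a b| ^ _) 2, ← Real.rpow_mul (abs_nonneg _)]
    congr 1; push_cast; ring
  rw [Finset.sum_congr rfl fun b _ => (pointwise b).symm] at cs
  rw [Finset.sum_congr rfl fun b _ => e3 b, Finset.sum_congr rfl fun b _ => e4 b] at cs
  have hup : ∑ b : Fin M → Bool, |rsum a b| ^ (2*(m:ℝ) - r)
      ≤ (2:ℝ)^M * Cst (2^(k+2)) := by
    have g1 : (0:ℝ) ≤ 2*(m:ℝ) - r := by rw [hmr]; linarith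
    have g2 : Even (2^(k+2) : ℕ) := ⟨2^(k+1), by ring⟩
    have g3 : (1:ℕ) ≤ 2^(k+2) := Nat.one_le_two_pow
    have g4 : 2*(m:ℝ) - r ≤ ((2^(k+2) : ℕ) : ℝ) := by
      rw [hmr]; push_cast
      have : ((2:ℝ))^(k+2) = 2 * 2^(k+1) := by ring
      rw [this]; linarith [hr]
    exact moment_upper a h1 g1 g2 g3 g4
  have hlow := moment_lower_pow2 a h1 k
  have hCpos := Cst_pos (2^(k+2))
  have h2M : (0:ℝ) < (2:ℝ)^M := by positivity
  have hS : (2:ℝ)^M * (2:ℝ)^M ≤ (∑ b : Fin M → Bool, |rsum a b| ^ r) * ((2:ℝ)^M * Cst (2^(k+2))) := by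
    calc (2:ℝ)^M * (2:ℝ)^M ≤ (∑ b : Fin M → Bool, (rsum a b)^(2^(k+1)))^2 := by nlinarith [hlow]
      _ ≤ (∑ b : Fin M → Bool, |rsum a b| ^ r) * ∑ b : Fin M → Bool, |rsum a b| ^ (2*(m:ℝ) - r) := cs
      _ ≤ (∑ b : Fin M → Bool, |rsum a b| ^ r) * ((2:ℝ)^M * Cst (2^(k+2))) := by
          apply mul_le_mul_of_nonneg_left hup
          apply Finset.sum_nonneg fun b _ => Real.rpow_nonneg (abs_nonneg _) _
  rw [div_le_iff₀ hCpos]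
  nlinarith [hS]

/-! ### The scale-invariant comparison -/

lemma core_norm {s t : ℝ} (hs : 0 < s) (hst : s ≤ t) (k : ℕ) (hk : t ≤ 2^(k+1))
    (a : Fin M → ℝ) (h1 : ∑ j, (a j)^2 = 1) :
    ((1/Cst (2^(k+2)))^(1/s) * (1/Cst (2^(k+2)))^(1/t)) *
        ((∑ b : Fin M → Bool, |rsum a b| ^ t) / 2^M) ^ (1/t)
      ≤ ((∑ b : Fin M → Bool, |rsum a b| ^ s) / 2^M) ^ (1/s) := by
  set C := Cst (2^(k+2)) with hC
  have hCpos : 0 < C := Cst_pos _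
  have hC1 : 1 ≤ C := Cst_one_le _
  have h2M : (0:ℝ) < (2:ℝ)^M := by positivity
  have ht : 0 < t := lt_of_lt_of_le hs hst
  have hupper : (∑ b : Fin M → Bool, |rsum a b| ^ t) / 2^M ≤ C := by
    rw [div_le_iff₀ h2M]
    have g2 : Even (2^(k+2) : ℕ) := ⟨2^(k+1), by ring⟩
    have g4 : t ≤ ((2^(k+2):ℕ):ℝ) := by
      push_cast
      have : ((2:ℝ))^(k+2) = 2 * 2^(k+1) := by ring
      rw [this]; nlinarith [hk, ht]
    have := moment_upper a h1 ht.le g2 Nat.one_le_two_pow g4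
    linarith [this]
  have hlower : 1/C ≤ (∑ b : Fin M → Bool, |rsum a b| ^ s) / 2^M := by
    rw [div_le_div_iff₀ hCpos h2M]
    have := moment_lower a h1 hs k (le_trans hst hk)
    rw [div_le_iff₀ hCpos] at this
    nlinarith [this]
  have r1 : ((∑ b : Fin M → Bool, |rsum a b| ^ t) / 2^M) ^ (1/t) ≤ C ^ (1/t) := by
    apply Real.rpow_le_rpow (by positivity) hupper (by positivity)
  have r2 : (1/C) ^ (1/s) ≤ ((∑ b : Fin M → Bool, |rsum a b| ^ s) / 2^M) ^ (1/s) := by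
    apply Real.rpow_le_rpow (by positivity) hlower (by positivity)
  have key : ((1/C)^(1/s) * (1/C)^(1/t)) * C^(1/t) = (1/C)^(1/s) := by
    rw [mul_assoc, ← Real.mul_rpow (by positivity) hCpos.le]
    rw [one_div_mul_cancel (ne_of_gt hCpos), Real.one_rpow, mul_one]
  calc ((1/C)^(1/s) * (1/C)^(1/t)) * ((∑ b : Fin M → Bool, |rsum a b| ^ t) / 2^M) ^ (1/t)
      ≤ ((1/C)^(1/s) * (1/C)^(1/t)) * C^(1/t) := by
        apply mul_le_mul_of_nonneg_left r1 (by positivity)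
    _ = (1/C)^(1/s) := key
    _ ≤ _ := r2

lemma core_compare {s t : ℝ} (hs : 0 < s) (hst : s ≤ t) :
    ∃ c : ℝ, 0 < c ∧ ∀ (M : ℕ) (a : Fin M → ℝ),
      c * ((∑ b : Fin M → Bool, |rsum a b| ^ t) / 2^M) ^ (1/t)
        ≤ ((∑ b : Fin M → Bool, |rsum a b| ^ s) / 2^M) ^ (1/s) := by
  have ht : 0 < t := lt_of_lt_of_le hs hst
  set k : ℕ := ⌈t⌉₊ with hkdef
  have hk : t ≤ 2^(k+1) := by
    calc t ≤ (k:ℝ) := Nat.le_ceil t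
      _ ≤ (2:ℝ)^k := by
          have h0 : k < 2 ^ k := Nat.lt_two_pow_self
          have : (k:ℝ) < ((2^k : ℕ) : ℝ) := by exact_mod_cast h0
          push_cast at this
          linarith
      _ ≤ (2:ℝ)^(k+1) := pow_le_pow_right₀ one_le_two (Nat.le_succ k)
  set C := Cst (2^(k+2)) with hC
  have hCpos : 0 < C := Cst_pos _
  refine ⟨(1/C)^(1/s) * (1/C)^(1/t), by positivity, ?_⟩
  intro M a
  by_cases ha : a = 0
  · subst ha
    have hz : ∀ b : Fin M → Bool, rsum (fun _ : Fin M => (0:ℝ)) b = 0 := rsum_zero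
    have e : ∀ (r : ℝ), 0 < r → (∑ b : Fin M → Bool, |rsum (0 : Fin M → ℝ) b| ^ r) = 0 := by
      intro r hr
      apply Finset.sum_eq_zero
      intro b _
      have : rsum (0 : Fin M → ℝ) b = 0 := hz b
      rw [this, abs_zero, Real.zero_rpow (ne_of_gt hr)]
    rw [e t ht, e s hs, zero_div, Real.zero_rpow (by positivity), Real.zero_rpow (by positivity),
      mul_zero]
  · set lam : ℝ := Real.sqrt (∑ j, (a j)^2) with hlam
    have hsum_pos : 0 < ∑ j, (a j)^2 := by
      rcases Function.ne_iff.1 ha with ⟨j, hj⟩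
      apply Finset.sum_pos' (fun i _ => sq_nonneg _)
        ⟨j, Finset.mem_univ j, by rw [← sq_abs]; exact pow_pos (abs_pos.mpr hj) 2⟩
    have hlampos : 0 < lam := Real.sqrt_pos.2 hsum_pos
    set a' : Fin M → ℝ := fun j => lam⁻¹ * a j with ha'
    have h1 : ∑ j, (a' j)^2 = 1 := by
      simp only [ha', mul_pow, ← Finset.mul_sum]
      rw [hlam, ← Real.sqrt_inv, Real.sq_sqrt (by positivity)]
      field_simp
    have hsc : ∀ (r : ℝ) (b : Fin M → Bool), |rsum a b| ^ r = lam ^ r * |rsum a' b| ^ r := by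
      intro r b
      have : rsum a b = lam * rsum a' b := by
        have : (fun j => lam * a' j) = a := by
          funext j; rw [ha']; field_simp
        rw [← this, rsum_smul]
      rw [this, abs_mul, abs_of_pos hlampos, Real.mul_rpow hlampos.le (abs_nonneg _)]
    have hsum : ∀ (r : ℝ), ((∑ b : Fin M → Bool, |rsum a b| ^ r) / 2^M)
        = lam ^ r * ((∑ b : Fin M → Bool, |rsum a' b| ^ r) / 2^M) := by
      intro r
      rw [Finset.sum_congr rfl fun b _ => hsc r b, ← Finset.mul_sum, mul_div_assoc]
    have hpow : ∀ (r : ℝ), 0 < r →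
        (lam ^ r * ((∑ b : Fin M → Bool, |rsum a' b| ^ r) / 2^M)) ^ (1/r)
        = lam * ((∑ b : Fin M → Bool, |rsum a' b| ^ r) / 2^M) ^ (1/r) := by
      intro r hr
      rw [Real.mul_rpow (by positivity) (by positivity), ← Real.rpow_mul hlampos.le,
        mul_one_div, div_self (ne_of_gt hr), Real.rpow_one]
    rw [hsum t, hsum s, hpow t ht, hpow s hs]
    have hcore := core_norm hs hst k hk a' h1
    calc (1/C)^(1/s) * (1/C)^(1/t) * (lam * ((∑ b : Fin M → Bool, |rsum a' b| ^ t) / 2^M) ^ (1/t))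
        = lam * ((1/C)^(1/s) * (1/C)^(1/t) * ((∑ b : Fin M → Bool, |rsum a' b| ^ t) / 2^M) ^ (1/t)) := by ring
      _ ≤ lam * ((∑ b : Fin M → Bool, |rsum a' b| ^ s) / 2^M) ^ (1/s) :=
          mul_le_mul_of_nonneg_left hcore hlampos.le

/-! ### Linear independence of Rademacher functions -/

lemma rad_li : LinearIndependent ℝ (rad : Fin M → (Fin M → Bool) → ℝ) := by
  rw [Fintype.linearIndependent_iff]
  intro g hg l
  have hb : ∀ b : Fin M → Bool, rsum g b = 0 := by
    intro b
    have := congrFun hg b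
    simpa [rsum, Finset.sum_apply] using this
  have h0 : ∑ b : Fin M → Bool, rsum g b * rad l b = 0 :=
    Finset.sum_eq_zero fun b _ => by rw [hb b, zero_mul]
  have h1 : ∑ b : Fin M → Bool, rsum g b * rad l b = g l * 2^M := by
    calc ∑ b : Fin M → Bool, rsum g b * rad l b
        = ∑ b : Fin M → Bool, ∑ j, g j * (rad j b * rad l b) := by
          refine Finset.sum_congr rfl fun b _ => ?_
          rw [rsum, Finset.sum_mul]
          exact Finset.sum_congr rfl fun j _ => by ring
      _ = ∑ j, g j * ∑ b : Fin M → Bool, rad j b * rad l b := by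
          rw [Finset.sum_comm]
          exact Finset.sum_congr rfl fun j _ => (Finset.mul_sum _ _ _).symm
      _ = g l * 2^M := by
          rw [Finset.sum_eq_single l (fun j _ h => by rw [sum_rad_mul_rad, if_neg h, mul_zero]) (by simp)]
          rw [sum_rad_mul_rad, if_pos rfl]
  rw [h0] at h1
  have : (0:ℝ) < 2^M := by positivity
  nlinarith [h1]

end FSSAux

namespace FSSAux
open Finset Real

/-! ### reindexing a coefficient vector -/

lemma rsum_extend {n M : ℕ} (h : n ≤ M) (cf : Fin n → ℝ) (b : Fin M → Bool) :
    rsum (fun j => if hj : (j:ℕ) < n then cf ⟨j.1, hj⟩ else 0) b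
      = ∑ k : Fin n, cf k * rad (Fin.castLE h k) b := by
  rw [rsum]
  have e1 : ∑ k : Fin n, cf k * rad (Fin.castLE h k) b
      = ∑ j ∈ Finset.univ.map (Fin.castLEEmb h),
          (if hj : (j:ℕ) < n then cf ⟨j.1, hj⟩ else 0) * rad j b := by
    rw [Finset.sum_map]
    refine Finset.sum_congr rfl fun k _ => ?_
    have hk : (((Fin.castLEEmb h) k : Fin M) : ℕ) < n := by
      simpa using k.isLt
    rw [dif_pos hk]
    congr 1
  rw [e1]
  symm
  apply Finset.sum_subset (Finset.subset_univ _)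
  intro j _ hj
  have hnot : ¬ ((j:ℕ) < n) := by
    intro hlt
    apply hj
    rw [Finset.mem_map]
    refine ⟨⟨j.1, hlt⟩, Finset.mem_univ _, ?_⟩
    ext
    simp
  rw [dif_neg hnot, zero_mul]

end FSSAux

namespace FSSAux2
open Finset Real

lemma elp_zero {ι : Type*} [Fintype ι] {p : ℝ≥0∞} (hp : p ≠ 0) (hp' : p ≠ ∞) :
    elp p (0 : ι → ℝ) = 0 := by
  have hpt : 0 < p.toReal := ENNReal.toReal_pos hp hp'
  rw [elp, elpE, if_neg hp']
  simp only [Pi.zero_apply, nnnorm_zero, ENNReal.coe_zero,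
    ENNReal.zero_rpow_of_pos hpt, tsum_zero]
  rw [ENNReal.zero_rpow_of_pos (by positivity)]

lemma elp_eq_ofReal {ι : Type*} [Fintype ι] {p : ℝ≥0∞} (hp : p ≠ 0) (hp' : p ≠ ∞)
    (g : ι → ℝ) :
    elp p g = ENNReal.ofReal ((∑ k, |g k| ^ p.toReal) ^ (1 / p.toReal)) := by
  have hpt : 0 < p.toReal := ENNReal.toReal_pos hp hp'
  rw [elp, elpE, if_neg hp', tsum_fintype]
  have e1 : ∀ k : ι, ((‖g k‖₊ : ℝ≥0∞)) ^ p.toReal = ENNReal.ofReal (|g k| ^ p.toReal) := by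
    intro k
    rw [← enorm_eq_nnnorm, Real.enorm_eq_ofReal_abs, ← ENNReal.ofReal_rpow_of_nonneg (abs_nonneg _) hpt.le]
  rw [Finset.sum_congr rfl fun k _ => e1 k,
    ← ENNReal.ofReal_sum_of_nonneg (fun k _ => by positivity),
    ← ENNReal.ofReal_rpow_of_nonneg (Finset.sum_nonneg fun k _ => by positivity) (by positivity)]

lemma blockNorm_single {p q : ℝ≥0∞} (hp : p ≠ 0) (hp' : p ≠ ∞) (hq : q ≠ 0)
    (A n : ℕ) (xg : Fin (2 ^ (A + n)) → ℝ) :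
    blockNorm p q A (Pi.single n xg)
      = ENNReal.ofReal ((2:ℝ) ^ (-(((A + n : ℕ) : ℝ)) / p.toReal)
          * (∑ k, |xg k| ^ p.toReal) ^ (1 / p.toReal)) := by
  have hpt : 0 < p.toReal := ENNReal.toReal_pos hp hp'
  set y : ℕ → ℝ≥0∞ := fun i =>
    (2 : ℝ≥0∞) ^ (-(((A + i : ℕ) : ℝ) / p.toReal)) * elp p ((Pi.single n xg : ∀ i, Fin (2^(A+i)) → ℝ) i) with hy
  have hy0 : ∀ i, i ≠ n → y i = 0 := by
    intro i hi
    rw [hy]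
    simp only [Pi.single_eq_of_ne hi]
    rw [elp_zero hp hp', mul_zero]
  have hyn : y n = ENNReal.ofReal ((2:ℝ) ^ (-(((A + n : ℕ) : ℝ)) / p.toReal)
      * (∑ k, |xg k| ^ p.toReal) ^ (1 / p.toReal)) := by
    rw [hy]
    simp only [Pi.single_eq_same]
    rw [elp_eq_ofReal hp hp']
    have w : (2 : ℝ≥0∞) ^ (-(((A + n : ℕ) : ℝ) / p.toReal))
        = ENNReal.ofReal ((2:ℝ) ^ (-(((A + n : ℕ) : ℝ)) / p.toReal)) := by
      rw [show ((2:ℝ≥0∞)) = ENNReal.ofReal 2 by norm_num,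
        ENNReal.ofReal_rpow_of_pos (by norm_num)]
      congr 1
      ring_nf
    rw [w, ← ENNReal.ofReal_mul (by positivity)]
  rw [blockNorm]
  rcases eq_or_ne q ∞ with rfl | hq'
  · rw [elpE, if_pos rfl, ← hy]
    apply le_antisymm
    · apply iSup_le
      intro i
      rcases eq_or_ne i n with rfl | hi
      · rw [hyn]
      · rw [hy0 i hi]; exact zero_le
    · rw [← hyn]; exact le_iSup y n
  · have hqt : 0 < q.toReal := ENNReal.toReal_pos hq hq'
    rw [elpE, if_neg hq']
    rw [tsum_eq_single n (fun i hi => by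
      rw [show (2:ℝ≥0∞) ^ (-(((A + i:ℕ):ℝ) / p.toReal)) * elp p ((Pi.single n xg : ∀ i, Fin (2^(A+i)) → ℝ) i) = y i from rfl,
        hy0 i hi, ENNReal.zero_rpow_of_pos hqt])]
    rw [show (2:ℝ≥0∞) ^ (-(((A + n:ℕ):ℝ) / p.toReal)) * elp p ((Pi.single n xg : ∀ i, Fin (2^(A+i)) → ℝ) n) = y n from rfl]
    rw [← ENNReal.rpow_mul, mul_one_div, div_self (ne_of_gt hqt), ENNReal.rpow_one, hyn]

lemma wform {pt : ℝ} (hpt : 0 < pt) (M : ℕ) {S : ℝ} (hS : 0 ≤ S) :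
    (2:ℝ) ^ ((-(M:ℝ))/pt) * S ^ (1/pt) = (S / 2^M) ^ (1/pt) := by
  have h1 : ((2:ℝ)^M) ^ ((1:ℝ)/pt) = (2:ℝ)^((M:ℝ)/pt) := by
    rw [← Real.rpow_natCast (2:ℝ) M, ← Real.rpow_mul (by norm_num), mul_one_div]
  rw [Real.div_rpow hS (by positivity), h1, neg_div, Real.rpow_neg (by norm_num)]
  rw [div_eq_mul_inv]
  ring

end FSSAux2

theorem block_embedding_not_FSS (p₀ p₁ q₀ q₁ : ℝ≥0∞)
    (hp₁ : 0 < p₁) (hp : p₁ ≤ p₀) (hp₀ : p₀ ≠ ∞)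
    (hq₀ : 0 < q₀) (hq : q₀ < q₁) (A : ℕ) :
    (∃ c : ℝ≥0∞, 0 < c ∧ ∀ n : ℕ, 1 ≤ n →
      c ≤ bern (blockNorm p₀ q₀ A) (blockNorm p₁ q₁ A) n) ∧
    ¬ Tendsto (bern (blockNorm p₀ q₀ A) (blockNorm p₁ q₁ A)) atTop (nhds 0) := by
  have hp₁0 : p₁ ≠ 0 := hp₁.ne'
  have hp₀0 : p₀ ≠ 0 := (lt_of_lt_of_le hp₁ hp).ne'
  have hp₁' : p₁ ≠ ∞ := fun h => hp₀ (top_le_iff.mp (h ▸ hp))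
  have hq₁0 : q₁ ≠ 0 := (hq₀.trans hq).ne'
  have hs : 0 < p₁.toReal := ENNReal.toReal_pos hp₁0 hp₁'
  have ht : 0 < p₀.toReal := ENNReal.toReal_pos hp₀0 hp₀
  have hst : p₁.toReal ≤ p₀.toReal := ENNReal.toReal_mono hp₀ hp
  obtain ⟨c, hc, hcore⟩ := FSSAux.core_compare hs hst
  set cE := ENNReal.ofReal c with hcEdef
  have hcE : 0 < cE := ENNReal.ofReal_pos.2 hc
  have key : ∀ n : ℕ, cE ≤ bern (blockNorm p₀ q₀ A) (blockNorm p₁ q₁ A) n := by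
    intro n
    have hcard : Fintype.card (Fin (2^(A+n))) = Fintype.card (Fin (A+n) → Bool) := by
      simp [Fintype.card_fun]
    set e : Fin (2^(A+n)) ≃ (Fin (A+n) → Bool) := Fintype.equivOfCardEq hcard with he
    set ι : ((Fin (A+n) → Bool) → ℝ) →ₗ[ℝ] ((i : ℕ) → Fin (2 ^ (A + i)) → ℝ) :=
      (LinearMap.single ℝ (fun i => Fin (2 ^ (A + i)) → ℝ) n).comp
        (LinearMap.funLeft ℝ ℝ e) with hιdef
    have hι : ∀ g : (Fin (A+n) → Bool) → ℝ, ι g = Pi.single n (fun k => g (e k)) := fun g => rfl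
    have hιinj : Function.Injective ι := by
      intro g g' hgg'
      have h2 : (fun k => g (e k)) = fun k => g' (e k) := by
        have h3 := congrFun hgg' n
        rw [hι, hι] at h3
        simpa [Pi.single_eq_same] using h3
      funext b
      have := congrFun h2 (e.symm b)
      simpa using this
    have hbn : ∀ (p q : ℝ≥0∞), p ≠ 0 → p ≠ ∞ → q ≠ 0 → ∀ g : (Fin (A+n) → Bool) → ℝ,
        blockNorm p q A (ι g)
          = ENNReal.ofReal (((∑ b : Fin (A+n) → Bool, |g b| ^ p.toReal) / 2^(A+n)) ^ (1 / p.toReal)) := by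
      intro p q h1 h2 h3 g
      rw [hι, FSSAux2.blockNorm_single h1 h2 h3]
      congr 1
      rw [show (∑ k : Fin (2^(A+n)), |g (e k)| ^ p.toReal) = ∑ b : Fin (A+n) → Bool, |g b| ^ p.toReal from
        Equiv.sum_comp e (fun b => |g b| ^ p.toReal)]
      exact FSSAux2.wform (ENNReal.toReal_pos h1 h2) (A+n)
        (Finset.sum_nonneg fun b _ => Real.rpow_nonneg (abs_nonneg _) _)
    set v : Fin n → ((i : ℕ) → Fin (2 ^ (A + i)) → ℝ) :=
      fun k => ι (FSSAux.rad (Fin.castLE (Nat.le_add_left n A) k)) with hv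
    have hli : LinearIndependent ℝ v := by
      have h1 : LinearIndependent ℝ (FSSAux.rad ∘ (Fin.castLE (Nat.le_add_left n A))) :=
        FSSAux.rad_li.comp _ (Fin.castLE_injective _)
      exact h1.map' ι (LinearMap.ker_eq_bot.mpr hιinj)
    set V : Submodule ℝ ((i : ℕ) → Fin (2 ^ (A + i)) → ℝ) := Submodule.span ℝ (Set.range v) with hV
    have hrank : Module.finrank ℝ V = n := by
      rw [hV, finrank_span_eq_card hli, Fintype.card_fin]
    have hrep : ∀ x ∈ V, ∃ a : Fin (A+n) → ℝ, x = ι (fun b => FSSAux.rsum a b) := by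
      intro x hx
      obtain ⟨cf, hcf⟩ := (Submodule.mem_span_range_iff_exists_fun ℝ).1 hx
      refine ⟨fun j => if h : (j:ℕ) < n then cf ⟨j.1, h⟩ else 0, ?_⟩
      rw [← hcf]
      have h4 : ∑ k, cf k • v k
          = ι (∑ k, cf k • FSSAux.rad (Fin.castLE (Nat.le_add_left n A) k)) := by
        rw [map_sum]
        exact Finset.sum_congr rfl fun k _ => (ι.map_smul _ _).symm
      rw [h4]
      congr 1
      funext b
      rw [Finset.sum_apply]
      rw [FSSAux.rsum_extend (Nat.le_add_left n A) cf b]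
      exact Finset.sum_congr rfl fun k _ => rfl
    have hfin : ∀ x ∈ V, blockNorm p₀ q₀ A x ≠ ∞ := by
      intro x hx
      obtain ⟨a, rfl⟩ := hrep x hx
      rw [hbn p₀ q₀ hp₀0 hp₀ hq₀.ne' _]
      exact ENNReal.ofReal_ne_top
    refine le_trans ?_ (le_iSup _ (⟨V, hrank, hfin⟩ :
      {V : Submodule ℝ ((i : ℕ) → Fin (2 ^ (A + i)) → ℝ) //
        Module.finrank ℝ V = n ∧ ∀ x ∈ V, blockNorm p₀ q₀ A x ≠ ∞}))
    apply le_iInf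
    rintro ⟨x, hxV, hx1⟩
    obtain ⟨a, rfl⟩ := hrep x hxV
    rw [hbn p₁ q₁ hp₁0 hp₁' hq₁0]
    rw [hbn p₀ q₀ hp₀0 hp₀ hq₀.ne'] at hx1
    have hXc := hcore (A+n) a
    calc cE = cE * ENNReal.ofReal (((∑ b : Fin (A+n) → Bool, |FSSAux.rsum a b| ^ p₀.toReal) / 2^(A+n)) ^ (1 / p₀.toReal)) := by
          rw [hx1, mul_one]
      _ = ENNReal.ofReal (c * ((∑ b : Fin (A+n) → Bool, |FSSAux.rsum a b| ^ p₀.toReal) / 2^(A+n)) ^ (1 / p₀.toReal)) := by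
          rw [hcEdef, ← ENNReal.ofReal_mul hc.le]
      _ ≤ ENNReal.ofReal (((∑ b : Fin (A+n) → Bool, |FSSAux.rsum a b| ^ p₁.toReal) / 2^(A+n)) ^ (1 / p₁.toReal)) :=
          ENNReal.ofReal_le_ofReal (by simpa using hXc)
  constructor
  · exact ⟨cE, hcE, fun n _ => key n⟩
  · intro h
    obtain ⟨n, hn⟩ := (h.eventually_lt_const hcE).exists
    exact absurd (key n) (not_le.2 hn)
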